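/- Let s₀,…,s_{n-1} ∈ ℝ², N ≥ 0, β ≥ 1. The reception zone Z₀ = {p ∈ ℝ² \ S : dist(s₀,p)^{-2}/(Σ_{i≥1} dist(sᵢ,p)^{-2} + N) ≥ β} ∪ {s₀} is convex. -/

import Mathlib

private lemma distSqCombo {E : Type*} [NormedAddCommGroup E] [InnerProductSpace ℝ E]
    (w p q : E) (a b : ℝ) (hab : a + b = 1) :
    dist w (a • p + b • q) ^ 2
      = a * dist w p ^ 2 + b * dist w q ^ 2 - a * b * dist p q ^ 2 := by
  have h1 : a • (w - p) + b • (w - q) = w - (a • p + b • q) := by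
    have h2 : a • (w - p) + b • (w - q) = (a + b) • w - (a • p + b • q) := by
      rw [smul_sub, smul_sub, add_smul]; abel
    rw [h2, hab, one_smul]
  have hpq : ‖p - q‖ ^ 2 = ‖w - q‖ ^ 2 - 2 * inner ℝ (w - q) (w - p) + ‖w - p‖ ^ 2 := by
    rw [show p - q = (w - q) - (w - p) by abel]; exact norm_sub_sq_real _ _
  rw [dist_eq_norm, dist_eq_norm, dist_eq_norm, dist_eq_norm, ← h1, norm_add_sq_real, hpq,
    real_inner_smul_left, real_inner_smul_right, norm_smul, norm_smul]
  simp only [Real.norm_eq_abs, mul_pow, sq_abs]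
  linear_combination (a * ‖w - p‖ ^ 2 + b * ‖w - q‖ ^ 2) * hab
    - 2 * a * b * (real_inner_comm (w - p) (w - q))

private lemma perTermPoly (a b u v x y t : ℝ) (ha : 0 ≤ a) (hb : 0 ≤ b)
    (hu : 0 ≤ u) (hv : 0 ≤ v) (ht : 0 ≤ t) (hux : u ≤ x) (hvy : v ≤ y) :
    (a * u + b * v) * (a * u + b * v - t) * x * y
      ≤ (a * u ^ 2 * y + b * v ^ 2 * x) * (a * x + b * y - t) := by
  nlinarith [mul_nonneg (mul_nonneg ha hb) (sq_nonneg (u * y - v * x)),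
    mul_nonneg (mul_nonneg (mul_nonneg ha (mul_nonneg hu (hv.trans hvy))) (sub_nonneg.2 hux)) ht,
    mul_nonneg (mul_nonneg (mul_nonneg hb (mul_nonneg hv (hu.trans hux))) (sub_nonneg.2 hvy)) ht]

set_option maxHeartbeats 2000000 in
theorem stmt12 (n : ℕ) (s : Fin (n + 1) → EuclideanSpace ℝ (Fin 2)) (N β : ℝ)
    (hN : 0 ≤ N) (hβ : 1 ≤ β)
    (Z₀ : Set (EuclideanSpace ℝ (Fin 2)))
    (hZ : Z₀ = {p | p ∉ Set.range s ∧
        β ≤ (dist (s 0) p ^ 2)⁻¹ /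
          ((∑ i ∈ Finset.univ.filter (· ≠ (0 : Fin (n + 1))), (dist (s i) p ^ 2)⁻¹) + N)}
      ∪ {s 0}) :
    Convex ℝ Z₀ := by
  subst hZ
  have hβ0 : (0:ℝ) < β := lt_of_lt_of_le one_pos hβ
  set T : Finset (Fin (n+1)) := Finset.univ.filter (· ≠ (0 : Fin (n+1))) with hT
  set f : Fin (n+1) → EuclideanSpace ℝ (Fin 2) → ℝ := fun i p => dist (s i) p ^ 2 with hf
  have hfnn : ∀ i p, 0 ≤ f i p := fun i p => sq_nonneg _
  -- endpoint facts
  have endpoint : ∀ p, (p ∈ ({p | p ∉ Set.range s ∧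
        β ≤ (dist (s 0) p ^ 2)⁻¹ /
          ((∑ i ∈ T, (dist (s i) p ^ 2)⁻¹) + N)} ∪ {s 0} : Set _)) →
      (∀ i ∈ T, f 0 p ≤ f i p) ∧
      ((∑ i ∈ T, f 0 p * (f i p)⁻¹) + N * f 0 p ≤ β⁻¹) ∧
      (p ≠ s 0 → 0 < (∑ i ∈ T, (f i p)⁻¹) + N) := by
    intro p hp
    rcases hp with hp | hp
    · obtain ⟨hrange, hineq⟩ := hp
      have hpos : ∀ i, 0 < f i p := by
        intro i
        have hne : s i ≠ p := fun h => hrange ⟨i, h ▸ rfl⟩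
        have := dist_pos.2 hne
        positivity
      have hSnn : 0 ≤ ∑ i ∈ T, (f i p)⁻¹ :=
        Finset.sum_nonneg fun i _ => inv_nonneg.2 (hfnn i p)
      have hSN : 0 < (∑ i ∈ T, (f i p)⁻¹) + N := by
        rcases lt_or_eq_of_le (by linarith : (0:ℝ) ≤ (∑ i ∈ T, (f i p)⁻¹) + N) with h | h
        · exact h
        · exfalso
          rw [← h, div_zero] at hineq; linarith
      have hu := hpos 0
      have h1 : β * ((∑ i ∈ T, (f i p)⁻¹) + N) ≤ (f 0 p)⁻¹ := (le_div_iff₀ hSN).1 hineq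
      have h2 : f 0 p * ((∑ i ∈ T, (f i p)⁻¹) + N) ≤ β⁻¹ := by
        rw [← mul_le_mul_iff_right₀ hβ0, ← mul_assoc, mul_comm β (f 0 p), mul_assoc,
          mul_inv_cancel₀ (ne_of_gt hβ0)]
        calc f 0 p * (β * ((∑ i ∈ T, (f i p)⁻¹) + N)) ≤ f 0 p * (f 0 p)⁻¹ :=
              mul_le_mul_of_nonneg_left h1 (le_of_lt hu)
          _ = 1 := mul_inv_cancel₀ (ne_of_gt hu)
      have hsum : (∑ i ∈ T, f 0 p * (f i p)⁻¹) + N * f 0 p ≤ β⁻¹ := by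
        rw [← Finset.mul_sum]
        calc f 0 p * (∑ i ∈ T, (f i p)⁻¹) + N * f 0 p
            = f 0 p * ((∑ i ∈ T, (f i p)⁻¹) + N) := by ring
          _ ≤ β⁻¹ := h2
      refine ⟨?_, hsum, fun _ => hSN⟩
      intro i hi
      have hle : f 0 p * (f i p)⁻¹ ≤ f 0 p * (∑ i ∈ T, (f i p)⁻¹) := by
        rw [Finset.mul_sum]
        exact Finset.single_le_sum
          (fun j _ => mul_nonneg (hfnn 0 p) (inv_nonneg.2 (hfnn j p))) hi
      have hterm : f 0 p * (f i p)⁻¹ ≤ 1 := by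
        have hβinv : β⁻¹ ≤ 1 := inv_le_one_of_one_le₀ hβ
        nlinarith [hpos 0]
      exact (div_le_one (hpos i)).1 (by rwa [div_eq_mul_inv])
    · have hps : p = s 0 := hp
      subst hps
      have h0 : f 0 (s 0) = 0 := by simp [hf]
      refine ⟨fun i _ => h0 ▸ hfnn i _, ?_, fun h => absurd rfl h⟩
      simp only [h0, zero_mul, mul_zero, Finset.sum_const_zero, add_zero, zero_add]
      positivity
  -- main argument
  intro p₁ hp₁ p₂ hp₂ a b ha hb hab
  set z := a • p₁ + b • p₂ with hzdef
  by_cases hz : z = s 0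
  · exact Set.mem_union_right _ hz
  obtain ⟨hle₁, hsum₁, hpos₁⟩ := endpoint p₁ hp₁
  obtain ⟨hle₂, hsum₂, hpos₂⟩ := endpoint p₂ hp₂
  set u := f 0 p₁ with hu_def
  set v := f 0 p₂ with hv_def
  have hu : 0 ≤ u := hfnn 0 p₁
  have hv : 0 ≤ v := hfnn 0 p₂
  set d2 := a * b * dist p₁ p₂ ^ 2 with hd2
  have hd2nn : 0 ≤ d2 := by positivity
  have hiden : ∀ i, f i z = a * f i p₁ + b * f i p₂ - d2 := fun i =>
    distSqCombo (s i) p₁ p₂ a b hab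
  set m := f 0 z with hm_def
  have hm : 0 < m := by
    have hne : s 0 ≠ z := fun h => hz h.symm
    have := dist_pos.2 hne
    positivity
  set W := a * u + b * v with hW_def
  have hmW : m = W - d2 := by rw [hW_def]; exact hiden 0
  have hWpos : 0 < W := by linarith
  -- each interference distance at z is positive
  have hqpos : ∀ i ∈ T, 0 < f i z := by
    intro i hi
    rcases lt_or_eq_of_le (hfnn i z) with h | h
    · exact h
    exfalso
    have hpoly := perTermPoly a b u v (f i p₁) (f i p₂) d2 ha hb hu hv hd2nn
      (hle₁ i hi) (hle₂ i hi)
    rw [← hW_def, ← hmW, ← hiden i, ← h, mul_zero] at hpoly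
    have hxy : f i p₁ * f i p₂ ≤ 0 := by nlinarith [mul_pos hWpos hm]
    have hor : f i p₁ = 0 ∨ f i p₂ = 0 := by
      rcases (mul_nonneg (hfnn i p₁) (hfnn i p₂)).lt_or_eq with h' | h'
      · exact absurd h' (not_lt.2 hxy)
      · exact mul_eq_zero.1 h'.symm
    have hcontra : s i = s 0 → False := by
      intro hss
      have hfz : f i z = f 0 z := by simp only [hf]; rw [hss]
      exact absurd (hfz.symm.trans h.symm) (ne_of_gt hm)
    rcases hor with h' | h'
    · have hpi : s i = p₁ := dist_eq_zero.1 (pow_eq_zero_iff (by norm_num) |>.1 h')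
      rcases hp₁ with hc | hc
      · exact hc.1 ⟨i, hpi⟩
      · exact hcontra (by rw [hpi]; exact hc)
    · have hpi : s i = p₂ := dist_eq_zero.1 (pow_eq_zero_iff (by norm_num) |>.1 h')
      rcases hp₂ with hc | hc
      · exact hc.1 ⟨i, hpi⟩
      · exact hcontra (by rw [hpi]; exact hc)
  -- per-term bound
  have hPT : ∀ i ∈ T, m * (f i z)⁻¹
      ≤ (a * (u * (u * (f i p₁)⁻¹)) + b * (v * (v * (f i p₂)⁻¹))) * W⁻¹ := by
    intro i hi
    have hq := hqpos i hi
    have hqe : f i z = a * f i p₁ + b * f i p₂ - d2 := hiden i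
    rcases (hfnn i p₁).lt_or_eq with hx | hx
    · rcases (hfnn i p₂).lt_or_eq with hy | hy
      · -- main case: both endpoint distances positive
        have hpoly := perTermPoly a b u v (f i p₁) (f i p₂) d2 ha hb hu hv hd2nn
          (hle₁ i hi) (hle₂ i hi)
        rw [← hW_def, ← hmW, ← hqe] at hpoly
        have e2 : (a * (u * (u * (f i p₁)⁻¹)) + b * (v * (v * (f i p₂)⁻¹))) * W⁻¹
            = (a * u ^ 2 * f i p₂ + b * v ^ 2 * f i p₁) / (W * f i p₁ * f i p₂) := by
          field_simp
        rw [e2, show m * (f i z)⁻¹ = m / f i z from (div_eq_mul_inv _ _).symm,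
          div_le_div_iff₀ hq (by positivity)]
        calc m * (W * f i p₁ * f i p₂) = W * m * f i p₁ * f i p₂ := by ring
          _ ≤ (a * u ^ 2 * f i p₂ + b * v ^ 2 * f i p₁) * f i z := hpoly
      · -- f i p₂ = 0 : then v = 0 and s i = s 0
        have hv0 : v = 0 := le_antisymm (hy ▸ hle₂ i hi) hv
        have hp2 : s i = p₂ := dist_eq_zero.1 (pow_eq_zero_iff (by norm_num) |>.1 hy.symm)
        have hp2' : p₂ = s 0 := by
          have hd : dist (s 0) p₂ ^ 2 = 0 := hv0
          exact (dist_eq_zero.1 (pow_eq_zero_iff (by norm_num) |>.1 hd)).symm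
        have hss : s i = s 0 := hp2.trans hp2'
        have hfz : f i z = m := by rw [hm_def]; simp only [hf]; rw [hss]
        have hfp1 : f i p₁ = u := by rw [hu_def]; simp only [hf]; rw [hss]
        have hau : W = a * u := by rw [hW_def, hv0, mul_zero, add_zero]
        have hupos : 0 < a * u := hau ▸ hWpos
        rw [hfz, hfp1, hv0, hau]
        rw [mul_inv_cancel₀ (ne_of_gt hm)]
        have hu' : 0 < u := by
          rcases hu.lt_or_eq with h' | h'
          · exact h'
          · exfalso; rw [← h', mul_zero] at hupos; exact lt_irrefl 0 hupos
        have heu : a * (u * (u * u⁻¹)) = a * u := by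
          rw [mul_inv_cancel₀ (ne_of_gt hu'), mul_one]
        rw [heu]
        simp only [zero_mul, mul_zero, add_zero]
        rw [mul_inv_cancel₀ (ne_of_gt hupos)]
    · -- f i p₁ = 0 : then u = 0 and s i = s 0
      have hu0 : u = 0 := le_antisymm (hx ▸ hle₁ i hi) hu
      have hp1 : s i = p₁ := dist_eq_zero.1 (pow_eq_zero_iff (by norm_num) |>.1 hx.symm)
      have hp1' : p₁ = s 0 := by
        have hd : dist (s 0) p₁ ^ 2 = 0 := hu0
        exact (dist_eq_zero.1 (pow_eq_zero_iff (by norm_num) |>.1 hd)).symm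
      have hss : s i = s 0 := hp1.trans hp1'
      have hfz : f i z = m := by rw [hm_def]; simp only [hf]; rw [hss]
      have hfp2 : f i p₂ = v := by rw [hv_def]; simp only [hf]; rw [hss]
      have hbv : W = b * v := by rw [hW_def, hu0, mul_zero, zero_add]
      have hvpos : 0 < b * v := hbv ▸ hWpos
      rw [hfz, hfp2, hu0, hbv]
      rw [mul_inv_cancel₀ (ne_of_gt hm)]
      have hv' : 0 < v := by
        rcases hv.lt_or_eq with h' | h'
        · exact h'
        · exfalso; rw [← h', mul_zero] at hvpos; exact lt_irrefl 0 hvpos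
      have hev : b * (v * (v * v⁻¹)) = b * v := by
        rw [mul_inv_cancel₀ (ne_of_gt hv'), mul_one]
      rw [hev]
      simp only [zero_mul, mul_zero, zero_add]
      rw [mul_inv_cancel₀ (ne_of_gt hvpos)]
  -- noise bound
  have hnoise : N * m ≤ N * ((a * (u * u) + b * (v * v)) * W⁻¹) := by
    have hid : a * (u * u) + b * (v * v) - (W - d2) * W
        = a * b * (u - v) ^ 2 + d2 * W := by
      rw [hW_def]; linear_combination (-(a * u * u + b * v * v)) * hab
    have h3 : m ≤ (a * (u * u) + b * (v * v)) * W⁻¹ := by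
      rw [← div_eq_mul_inv, le_div_iff₀ hWpos, hmW]
      nlinarith [mul_nonneg (mul_nonneg ha hb) (sq_nonneg (u - v)),
        mul_nonneg hd2nn (le_of_lt hWpos)]
    exact mul_le_mul_of_nonneg_left h3 hN
  -- aggregate
  have hsumPT : ∑ i ∈ T, m * (f i z)⁻¹
      ≤ ∑ i ∈ T, (a * (u * (u * (f i p₁)⁻¹)) + b * (v * (v * (f i p₂)⁻¹))) * W⁻¹ :=
    Finset.sum_le_sum hPT
  have hS2 : ∑ i ∈ T, (a * (u * (u * (f i p₁)⁻¹)) + b * (v * (v * (f i p₂)⁻¹))) * W⁻¹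
      = (a * u * (∑ i ∈ T, u * (f i p₁)⁻¹) + b * v * (∑ i ∈ T, v * (f i p₂)⁻¹)) * W⁻¹ := by
    rw [← Finset.sum_mul]
    congr 1
    rw [Finset.sum_add_distrib]
    congr 1
    · rw [Finset.mul_sum]
      exact Finset.sum_congr rfl fun i _ => by ring
    · rw [Finset.mul_sum]
      exact Finset.sum_congr rfl fun i _ => by ring
  have hcombine : m * ((∑ i ∈ T, (f i z)⁻¹) + N) ≤ β⁻¹ := by
    have e : m * ((∑ i ∈ T, (f i z)⁻¹) + N) = (∑ i ∈ T, m * (f i z)⁻¹) + N * m := by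
      rw [mul_add, Finset.mul_sum]; ring
    rw [e]
    have h1 : ∑ i ∈ T, u * (f i p₁)⁻¹ ≤ β⁻¹ - N * u := by linarith
    have h2 : ∑ i ∈ T, v * (f i p₂)⁻¹ ≤ β⁻¹ - N * v := by linarith
    have tail : (a * u * (∑ i ∈ T, u * (f i p₁)⁻¹) + b * v * (∑ i ∈ T, v * (f i p₂)⁻¹)) * W⁻¹
        + N * ((a * (u * u) + b * (v * v)) * W⁻¹) ≤ β⁻¹ := by
      have hWinv : 0 ≤ W⁻¹ := inv_nonneg.2 (le_of_lt hWpos)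
      have hstep : a * u * (∑ i ∈ T, u * (f i p₁)⁻¹) + b * v * (∑ i ∈ T, v * (f i p₂)⁻¹)
            + N * (a * (u * u) + b * (v * v))
          ≤ β⁻¹ * W := by
        have hb1 : a * u * (∑ i ∈ T, u * (f i p₁)⁻¹) ≤ a * u * (β⁻¹ - N * u) :=
          mul_le_mul_of_nonneg_left h1 (by positivity)
        have hb2 : b * v * (∑ i ∈ T, v * (f i p₂)⁻¹) ≤ b * v * (β⁻¹ - N * v) :=
          mul_le_mul_of_nonneg_left h2 (by positivity)
        have : a * u * (β⁻¹ - N * u) + b * v * (β⁻¹ - N * v)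
            + N * (a * (u * u) + b * (v * v)) = β⁻¹ * W := by
          rw [hW_def]; ring
        linarith
      calc (a * u * (∑ i ∈ T, u * (f i p₁)⁻¹) + b * v * (∑ i ∈ T, v * (f i p₂)⁻¹)) * W⁻¹
            + N * ((a * (u * u) + b * (v * v)) * W⁻¹)
          = (a * u * (∑ i ∈ T, u * (f i p₁)⁻¹) + b * v * (∑ i ∈ T, v * (f i p₂)⁻¹)
              + N * (a * (u * u) + b * (v * v))) * W⁻¹ := by ring
        _ ≤ (β⁻¹ * W) * W⁻¹ := mul_le_mul_of_nonneg_right hstep hWinv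
        _ = β⁻¹ * (W * W⁻¹) := by ring
        _ = β⁻¹ := by rw [mul_inv_cancel₀ (ne_of_gt hWpos), mul_one]
    calc (∑ i ∈ T, m * (f i z)⁻¹) + N * m
        ≤ (a * u * (∑ i ∈ T, u * (f i p₁)⁻¹) + b * v * (∑ i ∈ T, v * (f i p₂)⁻¹)) * W⁻¹
          + N * ((a * (u * u) + b * (v * v)) * W⁻¹) := by
          rw [← hS2]; exact add_le_add hsumPT hnoise
      _ ≤ β⁻¹ := tail
  -- positivity of the denominator at z
  have hSzN : 0 < (∑ i ∈ T, (f i z)⁻¹) + N := by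
    have hone : p₁ ≠ s 0 ∨ p₂ ≠ s 0 := by
      by_contra hcon
      push_neg at hcon
      apply hz
      rw [hzdef, hcon.1, hcon.2, ← add_smul, hab, one_smul]
    have hNT : 0 < N ∨ T.Nonempty := by
      rcases Finset.eq_empty_or_nonempty T with hTe | hTne
      · left
        rcases hone with h | h
        · have := hpos₁ h
          rwa [hTe, Finset.sum_empty, zero_add] at this
        · have := hpos₂ h
          rwa [hTe, Finset.sum_empty, zero_add] at this
      · right; exact hTne
    rcases hNT with h | h
    · have : 0 ≤ ∑ i ∈ T, (f i z)⁻¹ :=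
        Finset.sum_nonneg fun i _ => inv_nonneg.2 (hfnn i z)
      linarith
    · have : 0 < ∑ i ∈ T, (f i z)⁻¹ :=
        Finset.sum_pos (fun i hi => inv_pos.2 (hqpos i hi)) h
      linarith
  -- conclude membership
  refine Set.mem_union_left _ ⟨?_, ?_⟩
  · rintro ⟨i, hi⟩
    by_cases h0 : i = 0
    · exact hz (by rw [← hi, h0])
    · have hiT : i ∈ T := by simp [hT, h0]
      have hq := hqpos i hiT
      have : f i z = 0 := by simp only [hf]; rw [hi]; simp
      rw [this] at hq
      exact lt_irrefl 0 hq
  · show β ≤ (f 0 z)⁻¹ / ((∑ i ∈ T, (f i z)⁻¹) + N)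
    rw [le_div_iff₀ hSzN, ← hm_def, ← one_div, le_div_iff₀ hm]
    have h3 : m * ((∑ i ∈ T, (f i z)⁻¹) + N) * β ≤ β⁻¹ * β :=
      mul_le_mul_of_nonneg_right hcombine (le_of_lt hβ0)
    rw [inv_mul_cancel₀ (ne_of_gt hβ0)] at h3
    have h4 : β * ((∑ i ∈ T, (f i z)⁻¹) + N) * m
        = m * ((∑ i ∈ T, (f i z)⁻¹) + N) * β := by ring
    linarith
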